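/- Let r ≥ 2 be an integer and λ ∈ (0, 4^r) a real number, and let p(x) = (1−x)^{2r} − (−1)^r λ x^r. Then every root ρ ∈ ℂ of p satisfies (1+√2)^{−2} ≤ |ρ| ≤ (1+√2)² and (1+√2)^{−1} λ^{1/(2r)} ≤ |ρ − 1| ≤ (1+√2) λ^{1/(2r)}. Moreover, the two roots of the quadratic q₀(x) = −(1−x)² − λ^{1/r} x are distinct and both have modulus 1, while for each k ∈ {1,…,r−1} every root of the quadratic q_k(x) = −(1−x)² − λ^{1/r} e^{2kπi/r} x has modulus different from 1. -/

import Mathlib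

/-- The quadratic factor `q_k(x) = -(1-x)² - λ^{1/r} e^{2kπi/r} x` of
`p(x) = (1-x)^{2r} - (-1)^r λ x^r`. -/
noncomputable def qfac (r : ℕ) (lam : ℝ) (k : ℕ) (x : ℂ) : ℂ :=
  -(1 - x) ^ 2 -
    ((lam ^ ((r : ℝ)⁻¹) : ℝ) : ℂ) *
      Complex.exp (2 * (k : ℂ) * (Real.pi : ℂ) * Complex.I / (r : ℂ)) * x

private lemma sqrt2_inv : ((1 + Real.sqrt 2) ^ 2)⁻¹ = 3 - 2 * Real.sqrt 2 := by
  have hs2 : Real.sqrt 2 ^ 2 = 2 := Real.sq_sqrt (by norm_num)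
  have hs0 : (0:ℝ) ≤ Real.sqrt 2 := Real.sqrt_nonneg 2
  have h1 : (3 - 2*Real.sqrt 2) * ((1 + Real.sqrt 2)^2) = 1 := by nlinarith
  have h2 : ((1:ℝ) + Real.sqrt 2)^2 ≠ 0 := by nlinarith
  field_simp
  nlinarith

private lemma abound (a μ : ℝ) (ha0 : 0 ≤ a) (hμ0 : 0 < μ) (hμ4 : μ < 4)
    (h : (1-a)^2 ≤ μ*a) : ((1 + Real.sqrt 2)^2)⁻¹ ≤ a ∧ a ≤ (1 + Real.sqrt 2)^2 := by
  have hs2 : Real.sqrt 2 ^ 2 = 2 := Real.sq_sqrt (by norm_num)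
  have hs0 : (0:ℝ) ≤ Real.sqrt 2 := Real.sqrt_nonneg 2
  have hkey : a^2 - 6*a + 1 ≤ 0 := by nlinarith
  constructor
  · rw [sqrt2_inv]
    nlinarith [sq_nonneg (a - 3 + 2*Real.sqrt 2)]
  · nlinarith [sq_nonneg (a - 3 - 2*Real.sqrt 2)]

private lemma csq (μ : ℝ) (h0 : 0 < μ) (h4 : μ < 4) : ((2-μ)/2)^2 < 1 := by nlinarith

private lemma cos_one (x : ℝ) (hs : Real.sin x = 0) (hc : 0 ≤ Real.cos x) :
    Real.cos x = 1 := by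
  have hsq : Real.sin x ^ 2 + Real.cos x ^ 2 = 1 := Real.sin_sq_add_cos_sq x
  rw [hs] at hsq
  have h : (Real.cos x - 1) * (Real.cos x + 1) = 0 := by nlinarith
  rcases mul_eq_zero.mp h with h | h
  · linarith
  · linarith

/-- Every root `ρ` of `p(x) = (1-x)^{2r} - (-1)^r λ x^r` satisfies
`(1+√2)⁻² ≤ |ρ| ≤ (1+√2)²` and `(1+√2)⁻¹ λ^{1/(2r)} ≤ |ρ-1| ≤ (1+√2) λ^{1/(2r)}`.
The two roots of `q₀` are distinct and have modulus `1`, while for `1 ≤ k ≤ r-1` every root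
of `q_k` has modulus different from `1`. -/
theorem root_modulus_bounds
    (r : ℕ) (hr : 2 ≤ r) (lam : ℝ) (hlam0 : 0 < lam) (hlam4 : lam < 4 ^ r) :
    (∀ ρ : ℂ, (1 - ρ) ^ (2 * r) - (-1) ^ r * (lam : ℂ) * ρ ^ r = 0 →
      ((1 + Real.sqrt 2) ^ 2)⁻¹ ≤ ‖ρ‖ ∧
      ‖ρ‖ ≤ (1 + Real.sqrt 2) ^ 2 ∧
      (1 + Real.sqrt 2)⁻¹ * lam ^ ((2 * (r : ℝ))⁻¹) ≤ ‖ρ - 1‖ ∧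
      ‖ρ - 1‖ ≤ (1 + Real.sqrt 2) * lam ^ ((2 * (r : ℝ))⁻¹)) ∧
    (∃ ρ₁ ρ₂ : ℂ, ρ₁ ≠ ρ₂ ∧ qfac r lam 0 ρ₁ = 0 ∧ qfac r lam 0 ρ₂ = 0) ∧
    (∀ ρ : ℂ, qfac r lam 0 ρ = 0 → ‖ρ‖ = 1) ∧
    (∀ k : ℕ, 1 ≤ k → k ≤ r - 1 → ∀ ρ : ℂ, qfac r lam k ρ = 0 → ‖ρ‖ ≠ 1) := by
  have hr0 : (r : ℝ) ≠ 0 := by positivity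
  have hrne : r ≠ 0 := by omega
  set μ : ℝ := lam ^ ((r : ℝ)⁻¹) with hμdef
  have hμpos : 0 < μ := Real.rpow_pos_of_pos hlam0 _
  have hμr : μ ^ r = lam := by
    rw [hμdef, ← Real.rpow_natCast (lam ^ ((r:ℝ)⁻¹)) r, ← Real.rpow_mul hlam0.le,
      inv_mul_cancel₀ hr0, Real.rpow_one]
  have hμ4 : μ < 4 := by
    have h1 : μ < ((4:ℝ)^r) ^ ((r:ℝ)⁻¹) :=
      Real.rpow_lt_rpow hlam0.le hlam4 (by positivity)
    have h2 : ((4:ℝ)^r) ^ ((r:ℝ)⁻¹) = 4 := by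
      rw [← Real.rpow_natCast (4:ℝ) r, ← Real.rpow_mul (by norm_num),
        mul_inv_cancel₀ hr0, Real.rpow_one]
    linarith
  set s : ℝ := lam ^ ((2 * (r : ℝ))⁻¹) with hsdef
  have hspos : 0 < s := Real.rpow_pos_of_pos hlam0 _
  have hsμ : s ^ 2 = μ := by
    rw [hsdef, hμdef, ← Real.rpow_natCast (lam ^ ((2*(r:ℝ))⁻¹)) 2, ← Real.rpow_mul hlam0.le]
    congr 1
    field_simp
    norm_num
  have hexp0 : Complex.exp (2 * ((0:ℕ) : ℂ) * (Real.pi : ℂ) * Complex.I / (r : ℂ)) = 1 := by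
    simp
  refine ⟨?_, ?_, ?_, ?_⟩
  · -- part 1
    intro ρ hroot
    set a : ℝ := ‖ρ‖ with hadef
    set b : ℝ := ‖1 - ρ‖ with hbdef
    have ha0 : 0 ≤ a := norm_nonneg _
    have hb0 : 0 ≤ b := norm_nonneg _
    have heq : (1 - ρ) ^ (2*r) = (-1)^r * (lam:ℂ) * ρ^r := by linear_combination hroot
    have habs : b ^ (2*r) = lam * a ^ r := by
      have := congrArg (fun z : ℂ => ‖z‖) heq
      simpa [norm_pow, norm_mul, Complex.norm_real, abs_of_pos hlam0] using this
    have hpow : (b^2)^r = (μ * a)^r := by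
      rw [pow_mul] at habs
      rw [habs, mul_pow, hμr]
    have hb2 : b^2 = μ * a :=
      le_antisymm (le_of_pow_le_pow_left₀ hrne (by positivity) hpow.le)
        (le_of_pow_le_pow_left₀ hrne (sq_nonneg b) hpow.ge)
    have htri : |1 - a| ≤ b := by
      have := abs_norm_sub_norm_le (1:ℂ) ρ
      simpa [hadef, hbdef] using this
    have h1 : (1-a)^2 ≤ μ * a := by
      rw [← hb2, ← sq_abs (1-a)]
      exact pow_le_pow_left₀ (abs_nonneg _) htri 2
    obtain ⟨ha_lo, ha_hi⟩ := abound a μ ha0 hμpos hμ4 h1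
    have habρ : ‖ρ - 1‖ = b := by rw [hbdef, norm_sub_rev]
    refine ⟨ha_lo, ha_hi, ?_, ?_⟩
    · rw [habρ]
      have h1 : ((1 + Real.sqrt 2)⁻¹ * s)^2 ≤ b^2 := by
        rw [mul_pow, inv_pow, hsμ, hb2]
        have hμa : ((1 + Real.sqrt 2)^2)⁻¹ * μ ≤ a * μ :=
          mul_le_mul_of_nonneg_right ha_lo hμpos.le
        linarith
      exact le_of_pow_le_pow_left₀ two_ne_zero hb0 h1
    · rw [habρ]
      have h1 : b^2 ≤ ((1 + Real.sqrt 2) * s)^2 := by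
        rw [mul_pow, hsμ, hb2]
        have : a * μ ≤ (1 + Real.sqrt 2)^2 * μ := mul_le_mul_of_nonneg_right ha_hi hμpos.le
        linarith
      have hpos : 0 ≤ (1 + Real.sqrt 2) * s := by positivity
      exact le_of_pow_le_pow_left₀ two_ne_zero hpos h1
  · -- part 2: two distinct roots of q₀
    set c : ℝ := (2 - μ)/2 with hcdef
    have hc1 : c^2 < 1 := csq μ hμpos hμ4
    set t : ℝ := Real.sqrt (1 - c^2) with htdef
    have ht2 : t^2 = 1 - c^2 := Real.sq_sqrt (by linarith)
    have ht0 : 0 < t := Real.sqrt_pos.mpr (by linarith)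
    have htC : (t:ℂ)^2 = 1 - (c:ℂ)^2 := by exact_mod_cast congrArg (Complex.ofReal) ht2
    have hμc : ((μ:ℝ):ℂ) = 2 - 2*(c:ℂ) := by
      have h : μ = 2 - 2*c := by rw [hcdef]; ring
      rw [h]; push_cast; ring
    refine ⟨(c:ℂ) + (t:ℂ)*Complex.I, (c:ℂ) - (t:ℂ)*Complex.I, ?_, ?_, ?_⟩
    · intro h
      have him := congrArg Complex.im h
      simp at him
      exact ht0.ne' (by linarith)
    · unfold qfac
      rw [hexp0, hμc]
      linear_combination htC - (t:ℂ)^2 * Complex.I_sq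
    · unfold qfac
      rw [hexp0, hμc]
      linear_combination htC - (t:ℂ)^2 * Complex.I_sq
  · -- part 3: all roots of q₀ have modulus 1
    intro ρ hq
    set c : ℝ := (2 - μ)/2 with hcdef
    have hc1 : c^2 < 1 := csq μ hμpos hμ4
    set t : ℝ := Real.sqrt (1 - c^2) with htdef
    have ht2 : t^2 = 1 - c^2 := Real.sq_sqrt (by linarith)
    have htC : (t:ℂ)^2 = 1 - (c:ℂ)^2 := by exact_mod_cast congrArg (Complex.ofReal) ht2
    have hμc : ((μ:ℝ):ℂ) = 2 - 2*(c:ℂ) := by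
      have h : μ = 2 - 2*c := by rw [hcdef]; ring
      rw [h]; push_cast; ring
    rw [qfac, hexp0, hμc] at hq
    have hfac : (ρ - ((c:ℂ) + (t:ℂ)*Complex.I)) * (ρ - ((c:ℂ) - (t:ℂ)*Complex.I)) = 0 := by
      linear_combination -hq + htC - (t:ℂ)^2 * Complex.I_sq
    have h1 : c^2 + t^2 = 1 := by rw [ht2]; ring
    rcases mul_eq_zero.mp hfac with h | h
    · have hρ : ρ = (c:ℂ) + (t:ℂ)*Complex.I := by linear_combination h
      rw [hρ, Complex.norm_add_mul_I, h1, Real.sqrt_one]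
    · have hρ : ρ = (c:ℂ) + ((-t:ℝ):ℂ)*Complex.I := by push_cast; linear_combination h
      rw [hρ, Complex.norm_add_mul_I, show (-t)^2 = t^2 by ring, h1, Real.sqrt_one]
  · -- part 4
    intro k hk1 hkr ρ hq hab
    set θ : ℝ := 2 * Real.pi * k / r with hθdef
    have hexp : Complex.exp (2 * (k : ℂ) * (Real.pi : ℂ) * Complex.I / (r : ℂ)) =
        (Real.cos θ : ℂ) + (Real.sin θ : ℂ) * Complex.I := by
      rw [show (2 * (k : ℂ) * (Real.pi : ℂ) * Complex.I / (r : ℂ)) = ((θ:ℝ):ℂ) * Complex.I by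
        push_cast [hθdef]; ring]
      rw [Complex.exp_mul_I, Complex.ofReal_cos, Complex.ofReal_sin]
    rw [qfac, hexp] at hq
    have hzz : ρ * (starRingEnd ℂ) ρ = 1 := by
      rw [Complex.mul_conj, Complex.normSq_eq_norm_sq, hab]
      norm_num
    set z : ℂ := (starRingEnd ℂ) ρ with hzdef
    have key : ((μ:ℝ):ℂ) * ((Real.cos θ : ℂ) + (Real.sin θ : ℂ) * Complex.I) = 2 - ρ - z := by
      linear_combination (-z) * hq +
        (-(((μ:ℝ):ℂ) * ((Real.cos θ : ℂ) + (Real.sin θ : ℂ) * Complex.I) - 2 + ρ)) * hzz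
    rw [Complex.ext_iff] at key
    obtain ⟨kre, kim⟩ := key
    simp [Complex.add_re, Complex.add_im, Complex.mul_re, Complex.mul_im, hzdef,
      Complex.cos_ofReal_re, Complex.sin_ofReal_re] at kre kim
    have hsin : Real.sin θ = 0 := by
      rcases kim with h | h
      · exact absurd h hμpos.ne'
      · exact h
    have hreρ : ρ.re ≤ 1 := by
      have h := Complex.re_le_norm ρ
      rw [hab] at h; exact h
    have hcos_nonneg : 0 ≤ Real.cos θ := by
      have h2 : 0 ≤ μ * Real.cos θ := by rw [kre]; linarith
      exact nonneg_of_mul_nonneg_right h2 hμpos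
    have hcos1 : Real.cos θ = 1 := cos_one θ hsin hcos_nonneg
    obtain ⟨n, hn⟩ := (Real.cos_eq_one_iff θ).mp hcos1
    have hnr : (n:ℝ) * r = k := by
      rw [hθdef] at hn
      have hpi : (2:ℝ) * Real.pi ≠ 0 := by positivity
      field_simp at hn
      have h : (n:ℝ) * r * (2 * Real.pi) = k * (2 * Real.pi) := by rw [hn]
      exact mul_right_cancel₀ hpi h
    have hnrk : (n:ℤ) * r = k := by exact_mod_cast hnr
    have hkrlt : k < r := by omega
    rcases le_or_gt n 0 with h | h
    · have h2 : (n:ℤ) * r ≤ 0 := mul_nonpos_of_nonpos_of_nonneg h (by positivity)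
      omega
    · have h2 : (1:ℤ) * r ≤ n * r := mul_le_mul_of_nonneg_right h (by positivity)
      omega
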